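/- arXiv:1512.03334 — 6 statements merged into one kernel-verified Lean document; each statement's English description precedes it below -/
import Mathlib

section
/- Let U₁ be a unitary operator on a finite-dimensional complex inner product space such that for every eigenvalue λ of U₁, -λ is also an eigenvalue and the eigenspaces of λ and -λ have equal dimension. Then there exists a unitary operator U₂ on the same space with U₁U₂ + U₂U₁ = 0. -/
open LinearMap
open scoped DirectSum

theorem spectrum_symmetric_admits_anticommuting_partner
    {V : Type*} [NormedAddCommGroup V] [InnerProductSpace ℂ V]
    [FiniteDimensional ℂ V] (U₁ : V →ₗ[ℂ] V)
    (hU₁ : adjoint U₁ * U₁ = 1) (hU₁' : U₁ * adjoint U₁ = 1)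
    (hsym : ∀ lam : ℂ, Module.End.HasEigenvalue U₁ lam →
      Module.End.HasEigenvalue U₁ (-lam) ∧
      Module.finrank ℂ (Module.End.eigenspace U₁ lam) =
        Module.finrank ℂ (Module.End.eigenspace U₁ (-lam))) :
    ∃ U₂ : V →ₗ[ℂ] V, adjoint U₂ * U₂ = 1 ∧ U₂ * adjoint U₂ = 1 ∧
      U₁ * U₂ + U₂ * U₁ = 0 := by
  classical
  set E : ℂ → Submodule ℂ V := fun μ => Module.End.eigenspace U₁ μ with hEdef
  -- U₁ preserves inner products
  have hinner : ∀ x y : V, (inner ℂ (U₁ x) (U₁ y) : ℂ) = inner ℂ x y := by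
    intro x y
    have h := LinearMap.adjoint_inner_right U₁ x (U₁ y)
    have h2 : adjoint U₁ (U₁ y) = y := by
      have := congrArg (fun T : V →ₗ[ℂ] V => T y) hU₁
      simpa [Module.End.mul_apply] using this
    rw [← h, h2]
  -- eigenvalues have unit modulus
  have hmod : ∀ (μ : ℂ) (x : V), x ∈ E μ → x ≠ 0 → (starRingEnd ℂ) μ * μ = 1 := by
    intro μ x hx hx0
    have hUx : U₁ x = μ • x := Module.End.mem_eigenspace_iff.mp hx
    have h1 : (inner ℂ x x : ℂ) = (starRingEnd ℂ) μ * μ * inner ℂ x x := by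
      conv_lhs => rw [← hinner x x]
      rw [hUx, inner_smul_left, inner_smul_right]; ring
    have h2 : (inner ℂ x x : ℂ) ≠ 0 := inner_self_ne_zero.mpr hx0
    have h3 : ((starRingEnd ℂ) μ * μ - 1) * inner ℂ x x = 0 := by
      rw [sub_mul, one_mul, ← h1, sub_self]
    rcases mul_eq_zero.mp h3 with h | h
    · linear_combination h
    · exact absurd h h2
  -- the eigenspaces form an orthogonal family
  have horth : OrthogonalFamily ℂ (fun μ => E μ) (fun μ => (E μ).subtypeₗᵢ) := by
    intro μ ν hne x y
    show (inner ℂ (x : V) (y : V) : ℂ) = 0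
    by_cases hx0 : (x : V) = 0
    · simp [hx0]
    by_cases hy0 : (y : V) = 0
    · simp [hy0]
    have hμ := hmod μ x x.2 hx0
    have hν := hmod ν y y.2 hy0
    have h1 : (inner ℂ (x : V) (y : V) : ℂ)
        = (starRingEnd ℂ) μ * ν * inner ℂ (x : V) (y : V) := by
      conv_lhs => rw [← hinner (x : V) (y : V)]
      rw [Module.End.mem_eigenspace_iff.mp x.2, Module.End.mem_eigenspace_iff.mp y.2,
        inner_smul_left, inner_smul_right]; ring
    by_contra hiy
    have h3 : ((starRingEnd ℂ) μ * ν - 1) * inner ℂ (x : V) (y : V) = 0 := by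
      rw [sub_mul, one_mul, ← h1, sub_self]
    rcases mul_eq_zero.mp h3 with h | h
    · have hone : (starRingEnd ℂ) μ * ν = 1 := by linear_combination h
      have hc0 : (starRingEnd ℂ) μ ≠ 0 := left_ne_zero_of_mul_eq_one hμ
      have : μ = ν := by
        have := hone.trans hμ.symm
        exact (mul_left_cancel₀ hc0 this).symm
      exact hne this
    · exact hiy h
  -- real and imaginary parts of U₁
  set A : V →ₗ[ℂ] V := (2:ℂ)⁻¹ • (U₁ + adjoint U₁) with hAdef
  set B : V →ₗ[ℂ] V := (2 * Complex.I)⁻¹ • (U₁ - adjoint U₁) with hBdef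
  have hAsym : A.IsSymmetric := by
    intro x y
    simp only [hAdef, LinearMap.smul_apply, LinearMap.add_apply,
      inner_smul_left, inner_smul_right, inner_add_left, inner_add_right,
      LinearMap.adjoint_inner_left, LinearMap.adjoint_inner_right]
    rw [show ((starRingEnd ℂ) (2:ℂ)⁻¹) = (2:ℂ)⁻¹ by rw [map_inv₀, map_ofNat]]
    ring
  have hBsym : B.IsSymmetric := by
    intro x y
    simp only [hBdef, LinearMap.smul_apply, LinearMap.sub_apply,
      inner_smul_left, inner_smul_right, inner_sub_left, inner_sub_right,
      LinearMap.adjoint_inner_left, LinearMap.adjoint_inner_right]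
    rw [show ((starRingEnd ℂ) (2 * Complex.I)⁻¹) = -(2 * Complex.I)⁻¹ by
      rw [map_inv₀, map_mul, map_ofNat, Complex.conj_I, mul_neg, inv_neg]]
    ring
  have hkey : (U₁ + adjoint U₁) * (U₁ - adjoint U₁)
      = (U₁ - adjoint U₁) * (U₁ + adjoint U₁) := by
    simp only [mul_sub, sub_mul, add_mul, mul_add, hU₁, hU₁']
    abel
  have hcomm : Commute A B := by
    show A * B = B * A
    rw [hAdef, hBdef, smul_mul_smul_comm, smul_mul_smul_comm, hkey, mul_comm]
  have hABU : A + Complex.I • B = U₁ := by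
    have hc : Complex.I * (2 * Complex.I)⁻¹ = (2:ℂ)⁻¹ := by
      field_simp
    rw [hAdef, hBdef, smul_smul, hc, ← smul_add]
    ext x
    simp only [LinearMap.smul_apply, LinearMap.add_apply, LinearMap.sub_apply]
    module
  -- joint eigenspaces sit inside eigenspaces of U₁
  have hjoint : ∀ a b : ℂ,
      Module.End.eigenspace A a ⊓ Module.End.eigenspace B b ≤ E (a + Complex.I * b) := by
    intro a b x hx
    obtain ⟨hxa, hxb⟩ := hx
    have hA : A x = a • x := Module.End.mem_eigenspace_iff.mp hxa
    have hB : B x = b • x := Module.End.mem_eigenspace_iff.mp hxb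
    have : U₁ x = (a + Complex.I * b) • x := by
      rw [← hABU]
      simp [LinearMap.add_apply, LinearMap.smul_apply, hA, hB, smul_smul, add_smul]
    exact Module.End.mem_eigenspace_iff.mpr this
  have htop : (⨆ μ, E μ) = ⊤ := by
    rw [← top_le_iff,
      ← hAsym.iSup_iSup_eigenspace_inf_eigenspace_eq_top_of_commute hBsym hcomm]
    refine iSup_le fun a => iSup_le fun b => ?_
    exact le_trans (hjoint a b) (le_iSup E (a + Complex.I * b))
  have hint : DirectSum.IsInternal E :=
    horth.isInternal_iff.mpr (by rw [htop, Submodule.top_orthogonal_eq_bot])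
  -- equal dimensions of opposite eigenspaces
  have hfr : ∀ μ : ℂ, Module.finrank ℂ (E μ) = Module.finrank ℂ (E (-μ)) := by
    intro μ
    by_cases h : Module.End.HasEigenvalue U₁ μ
    · exact (hsym μ h).2
    · have h1 : E μ = ⊥ := by
        by_contra hb; exact h (Module.End.hasEigenvalue_iff.mpr hb)
      have h2 : E (-μ) = ⊥ := by
        by_contra hb
        have := (hsym (-μ) (Module.End.hasEigenvalue_iff.mpr hb)).1
        rw [neg_neg] at this
        exact h this
      rw [h1, h2]
  -- choose isometries between opposite eigenspaces
  have hiso : ∀ μ : ℂ, Nonempty ((E μ) ≃ₗᵢ[ℂ] (E (-μ))) := fun μ =>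
    ⟨((stdOrthonormalBasis ℂ (E μ)).repr.trans
        (LinearIsometryEquiv.piLpCongrLeft 2 ℂ ℂ (finCongr (hfr μ)))).trans
      (stdOrthonormalBasis ℂ (E (-μ))).repr.symm⟩
  let e : ∀ μ : ℂ, (E μ) ≃ₗᵢ[ℂ] (E (-μ)) := fun μ => (hiso μ).some
  let F : ∀ μ : ℂ, (E μ) →ₗ[ℂ] V := fun μ =>
    (E (-μ)).subtype ∘ₗ (e μ).toLinearEquiv.toLinearMap
  let g : (⨁ (μ : ℂ), ↥(E μ)) →ₗ[ℂ] V := DirectSum.toModule ℂ ℂ V F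
  let d : (⨁ (μ : ℂ), ↥(E μ)) ≃ₗ[ℂ] V := LinearEquiv.ofBijective (DirectSum.coeLinearMap E) hint
  set U₂ : V →ₗ[ℂ] V := g ∘ₗ (d.symm : V →ₗ[ℂ] ⨁ (μ : ℂ), ↥(E μ)) with hU₂def
  have hkey2 : ∀ (μ : ℂ) (v : E μ), U₂ (v : V) = ((e μ) v : V) := by
    intro μ v
    have h1 : d.symm (v : V) = DirectSum.lof ℂ ℂ (fun μ => E μ) μ v := by
      apply d.injective
      rw [LinearEquiv.apply_symm_apply]
      show (v : V) = DirectSum.coeLinearMap E (DirectSum.lof ℂ ℂ (fun μ => E μ) μ v)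
      simp [DirectSum.lof_eq_of, DirectSum.coeLinearMap_of]
    show g (d.symm (v : V)) = _
    rw [h1]
    simp [g, F, DirectSum.toModule_lof]
  -- U₂ preserves inner products
  have hSS : ∀ (μ ν : ℂ) (v : E μ) (w : E ν),
      (inner ℂ (U₂ (v : V)) (U₂ (w : V)) : ℂ) = inner ℂ (v : V) (w : V) := by
    intro μ ν v w
    rw [hkey2, hkey2]
    by_cases h : μ = ν
    · subst h
      exact (e μ).inner_map_map v w
    · have h2 : -μ ≠ -ν := fun hc => h (neg_injective hc)
      have ha : (inner ℂ (((e μ) v : V)) (((e ν) w : V)) : ℂ) = 0 := horth h2 ((e μ) v) ((e ν) w)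
      have hb : (inner ℂ ((v : V)) ((w : V)) : ℂ) = 0 := horth h v w
      rw [ha, hb]
  have hU₂inner : ∀ x y : V, (inner ℂ (U₂ x) (U₂ y) : ℂ) = inner ℂ x y := by
    have step : ∀ (μ : ℂ) (v : E μ) (y : V),
        (inner ℂ (U₂ (v : V)) (U₂ y) : ℂ) = inner ℂ (v : V) y := by
      intro μ v y
      have hy : y ∈ ⨆ ν, E ν := htop ▸ Submodule.mem_top
      refine Submodule.iSup_induction E (motive := fun y =>
        (inner ℂ (U₂ (v : V)) (U₂ y) : ℂ) = inner ℂ (v : V) y) hy ?_ ?_ ?_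
      · intro ν w hw
        exact hSS μ ν v ⟨w, hw⟩
      · simp
      · intro a b ha hb
        rw [map_add, inner_add_right, inner_add_right, ha, hb]
    intro x y
    have hx : x ∈ ⨆ μ, E μ := htop ▸ Submodule.mem_top
    refine Submodule.iSup_induction E (motive := fun x =>
      (inner ℂ (U₂ x) (U₂ y) : ℂ) = inner ℂ x y) hx ?_ ?_ ?_
    · intro μ w hw
      exact step μ ⟨w, hw⟩ y
    · simp
    · intro a b ha hb
      rw [map_add, inner_add_left, inner_add_left, ha, hb]
  have hadj : adjoint U₂ * U₂ = 1 := by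
    ext x
    refine ext_inner_right ℂ fun y => ?_
    simp only [Module.End.mul_apply, Module.End.one_apply]
    rw [LinearMap.adjoint_inner_left, hU₂inner]
  refine ⟨U₂, hadj, mul_eq_one_comm.mp hadj, ?_⟩
  ext x
  simp only [LinearMap.add_apply, Module.End.mul_apply, LinearMap.zero_apply]
  have hx : x ∈ ⨆ μ, E μ := htop ▸ Submodule.mem_top
  refine Submodule.iSup_induction E (motive := fun x => U₁ (U₂ x) + U₂ (U₁ x) = 0) hx ?_ ?_ ?_
  · intro μ w hw
    have h1 : U₂ w = ((e μ) ⟨w, hw⟩ : V) := hkey2 μ ⟨w, hw⟩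
    have h2 : U₁ (U₂ w) = (-μ) • U₂ w := by
      rw [h1]
      exact Module.End.mem_eigenspace_iff.mp ((e μ) ⟨w, hw⟩).2
    have h3 : U₁ w = μ • w := Module.End.mem_eigenspace_iff.mp hw
    rw [h2, h3, map_smul]
    module
  · simp
  · intro a b ha hb
    rw [map_add, map_add, map_add, map_add]
    rw [show U₁ (U₂ a) + U₁ (U₂ b) + (U₂ (U₁ a) + U₂ (U₁ b))
        = (U₁ (U₂ a) + U₂ (U₁ a)) + (U₁ (U₂ b) + U₂ (U₁ b)) by abel, ha, hb, add_zero]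
end

section
/- A unitary operator on a finite-dimensional complex inner product space admits an anticommuting unitary partner if and only if its characteristic polynomial is an even or odd function, equivalently, for each eigenvalue λ the multiplicity of λ equals the multiplicity of -λ. In particular, the dimension of the space must be even. -/
open LinearMap Polynomial

namespace AnticommAux

variable {V : Type*} [NormedAddCommGroup V] [InnerProductSpace ℂ V]
  [FiniteDimensional ℂ V]

local notation "⟪" x ", " y "⟫" => @inner ℂ _ _ x y

/-- For a normal operator, `M (M v) = 0` implies `M v = 0`. -/
lemma normal_sq_ker (M : V →ₗ[ℂ] V) (h : adjoint M * M = M * adjoint M) :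
    ∀ v : V, M (M v) = 0 → M v = 0 := by
  have key : ∀ w : V, M w = 0 → adjoint M w = 0 := by
    intro w hw
    have h1 : ⟪adjoint M w, adjoint M w⟫ = 0 := by
      rw [adjoint_inner_left]
      have h2 : M (adjoint M w) = (adjoint M * M) w := by rw [h]; rfl
      rw [h2, Module.End.mul_apply, hw, map_zero, inner_zero_right]
    exact inner_self_eq_zero.mp h1
  intro v hv
  have h3 : adjoint M (M v) = 0 := key _ hv
  have h4 : ⟪M v, M v⟫ = 0 := by
    rw [← adjoint_inner_left, h3, inner_zero_left]
  exact inner_self_eq_zero.mp h4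

lemma normal_pow_ker (M : V →ₗ[ℂ] V) (h : adjoint M * M = M * adjoint M) :
    ∀ (k : ℕ) (v : V), (M ^ k) v = 0 → M v = 0 := by
  intro k
  induction k with
  | zero => intro v hv; simp only [pow_zero, Module.End.one_apply] at hv; rw [hv, map_zero]
  | succ n ih =>
    intro v hv
    have h1 : (M ^ n) (M v) = 0 := by
      rw [pow_succ, Module.End.mul_apply] at hv; exact hv
    exact normal_sq_ker M h v (ih (M v) h1)

variable (U : V →ₗ[ℂ] V)

/-- `U - c • 1` is normal for unitary `U`. -/
lemma sub_smul_normal (hU : adjoint U * U = 1) (hU' : U * adjoint U = 1) (c : ℂ) :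
    adjoint (U - c • 1) * (U - c • 1) = (U - c • 1) * adjoint (U - c • 1) := by
  have h1 : adjoint (U - c • (1 : V →ₗ[ℂ] V))
      = adjoint U - (starRingEnd ℂ c) • (1 : V →ₗ[ℂ] V) := by
    rw [← star_eq_adjoint, ← star_eq_adjoint, star_sub, star_smul, star_one]
    rfl
  rw [h1]
  simp only [sub_mul, mul_sub, hU, hU', smul_mul_assoc, mul_smul_comm, one_mul, mul_one,
    smul_smul, smul_sub]
  rw [mul_comm ((starRingEnd ℂ) c) c]
  abel

lemma maxGen_eq_eigen (hU : adjoint U * U = 1) (hU' : U * adjoint U = 1) (c : ℂ) :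
    Module.End.maxGenEigenspace U c = Module.End.eigenspace U c := by
  apply le_antisymm
  · intro x hx
    obtain ⟨k, hk⟩ := Module.End.mem_genEigenspace_top.mp hx
    rw [LinearMap.mem_ker] at hk
    have h0 : (U - c • 1) x = 0 :=
      normal_pow_ker (U - c • 1) (sub_smul_normal U hU hU' c) k x hk
    rw [Module.End.eigenspace_def, LinearMap.mem_ker]
    exact h0
  · exact (Module.End.genEigenspace U c).monotone le_top

lemma iSup_eigenspace_eq_top (hU : adjoint U * U = 1) (hU' : U * adjoint U = 1) :
    ⨆ c : ℂ, Module.End.eigenspace U c = ⊤ := by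
  have h := Module.End.iSup_maxGenEigenspace_eq_top (K := ℂ) (V := V) U
  rw [← h]
  exact iSup_congr fun c => (maxGen_eq_eigen U hU hU' c).symm

lemma eig_orth (hU : adjoint U * U = 1) {a b : ℂ} (hab : a ≠ b) {v w : V}
    (hv : v ∈ Module.End.eigenspace U a) (hw : w ∈ Module.End.eigenspace U b) :
    ⟪v, w⟫ = 0 := by
  by_contra hne
  rw [Module.End.mem_eigenspace_iff] at hv hw
  have key : ∀ (x y : V) (p q : ℂ), U x = p • x → U y = q • y →
      ⟪x, y⟫ = (starRingEnd ℂ) p * q * ⟪x, y⟫ := by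
    intro x y p q hx hy
    calc ⟪x, y⟫ = ⟪(adjoint U * U) x, y⟫ := by rw [hU, Module.End.one_apply]
    _ = ⟪U x, U y⟫ := by rw [Module.End.mul_apply, adjoint_inner_left]
    _ = (starRingEnd ℂ) p * q * ⟪x, y⟫ := by
        rw [hx, hy, inner_smul_left, inner_smul_right]; ring
  have hv0 : v ≠ 0 := by rintro rfl; exact hne (inner_zero_left _)
  have haa : (starRingEnd ℂ) a * a = 1 := by
    have h1 := key v v a a hv hv
    have h2 : ⟪v, v⟫ ≠ 0 := inner_self_ne_zero.mpr hv0
    have h3 : ((starRingEnd ℂ) a * a - 1) * ⟪v, v⟫ = 0 := by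
      rw [sub_mul, one_mul, ← h1, sub_self]
    rcases mul_eq_zero.mp h3 with h | h
    · rwa [sub_eq_zero] at h
    · exact absurd h h2
  have hab1 : (starRingEnd ℂ) a * b = 1 := by
    have h1 := key v w a b hv hw
    have h3 : ((starRingEnd ℂ) a * b - 1) * ⟪v, w⟫ = 0 := by
      rw [sub_mul, one_mul, ← h1, sub_self]
    rcases mul_eq_zero.mp h3 with h | h
    · rwa [sub_eq_zero] at h
    · exact absurd h hne
  have ha0 : (starRingEnd ℂ) a ≠ 0 := by
    intro h; rw [h, zero_mul] at haa; exact zero_ne_one haa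
  apply hab
  have := haa.trans hab1.symm
  exact mul_left_cancel₀ ha0 this

/-- An orthonormal eigenbasis for a unitary operator. -/
lemma exists_eigenbasis (hU : adjoint U * U = 1) (hU' : U * adjoint U = 1) :
    ∃ (m : ℕ) (b : OrthonormalBasis (Fin m) ℂ V) (μ : Fin m → ℂ),
      (∀ j, U (b j) = μ j • b j) ∧
      (∀ c : ℂ, Module.finrank ℂ (Module.End.eigenspace U c) =
        Nat.card {j // μ j = c}) := by
  classical
  have hint : IsIntegral ℂ U := Algebra.IsIntegral.isIntegral U
  have hfin : {c : ℂ | Module.End.HasEigenvalue U c}.Finite := by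
    apply Set.Finite.subset (Polynomial.finite_setOf_isRoot (minpoly.ne_zero hint))
    intro c hc
    exact Module.End.hasEigenvalue_iff_isRoot.mp hc
  haveI : Fintype {c : ℂ | Module.End.HasEigenvalue U c} := hfin.fintype
  set Λ := {c : ℂ | Module.End.HasEigenvalue U c}
  set E : Λ → Submodule ℂ V := fun l => Module.End.eigenspace U l.1 with hE
  have horth : OrthogonalFamily ℂ (fun l => E l) (fun l => (E l).subtypeₗᵢ) := by
    intro i j hij v w
    exact eig_orth U hU (fun h => hij (Subtype.ext h)) v.2 w.2
  have hsup : ⨆ l, E l = ⊤ := by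
    rw [← iSup_eigenspace_eq_top U hU hU']
    apply le_antisymm
    · exact iSup_le fun l => le_iSup (fun c => Module.End.eigenspace U c) l.1
    · apply iSup_le
      intro c
      by_cases h : Module.End.HasEigenvalue U c
      · exact le_iSup_of_le ⟨c, h⟩ le_rfl
      · rw [not_not.mp (fun h' => h (Module.End.hasEigenvalue_iff.mpr h'))]
        exact bot_le
  have hInt : DirectSum.IsInternal E :=
    DirectSum.isInternal_submodule_of_iSupIndep_of_iSup_eq_top horth.independent hsup
  set n : Λ → ℕ := fun l => Module.finrank ℂ (E l) with hn
  set b : OrthonormalBasis (Σ l : Λ, Fin (n l)) ℂ V :=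
    hInt.collectedOrthonormalBasis horth (fun l => stdOrthonormalBasis ℂ (E l)) with hbdef
  have hold : ∀ c : ℂ, Module.finrank ℂ (Module.End.eigenspace U c) =
      Nat.card {j : Σ l : Λ, Fin (n l) // j.1.1 = c} := by
    intro c
    by_cases h : Module.End.HasEigenvalue U c
    · have e2 : Fin (n ⟨c, h⟩) ≃ {p : Σ l : Λ, Fin (n l) // p.1 = ⟨c, h⟩} := by
        apply Equiv.ofBijective (fun i => ⟨⟨⟨c, h⟩, i⟩, rfl⟩)
        constructor
        · intro i₁ i₂ hi
          exact Fin.ext (congrArg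
            (fun p : {p : Σ l : Λ, Fin (n l) // p.1 = ⟨c, h⟩} => (p.1.2 : ℕ)) hi)
        · rintro ⟨⟨l, i⟩, hp⟩
          have hp' : l = ⟨c, h⟩ := hp
          subst hp'
          exact ⟨i, rfl⟩
      have e1 : {j : Σ l : Λ, Fin (n l) // j.1.1 = c} ≃
          {p : Σ l : Λ, Fin (n l) // p.1 = ⟨c, h⟩} :=
        Equiv.subtypeEquivRight (fun p =>
          ⟨fun h' => Subtype.ext h', fun h' => congrArg Subtype.val h'⟩)
      rw [Nat.card_congr (e1.trans e2.symm), Nat.card_eq_fintype_card, Fintype.card_fin]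
    · have hE0 : Module.End.eigenspace U c = ⊥ :=
        not_not.mp (fun h' => h (Module.End.hasEigenvalue_iff.mpr h'))
      have : IsEmpty {j : Σ l : Λ, Fin (n l) // j.1.1 = c} :=
        ⟨fun p => h (p.2 ▸ p.1.1.2)⟩
      rw [hE0, Nat.card_of_isEmpty, finrank_bot]
  set q := Fintype.equivFin (Σ l : Λ, Fin (n l)) with hq
  refine ⟨Fintype.card (Σ l : Λ, Fin (n l)), b.reindex q, fun i => (q.symm i).1.1,
    fun i => ?_, fun c => ?_⟩
  · rw [OrthonormalBasis.reindex_apply]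
    have hmem : b (q.symm i) ∈ E (q.symm i).1 :=
      hInt.collectedOrthonormalBasis_mem horth (fun l => stdOrthonormalBasis ℂ (E l)) _
    exact Module.End.mem_eigenspace_iff.mp hmem
  · rw [hold c]
    exact Nat.card_congr (Equiv.subtypeEquiv q (fun j => by simp))

lemma exists_perm {J : Type} [Fintype J] (μ : J → ℂ)
    (h : ∀ c : ℂ, Nat.card {j // μ j = c} = Nat.card {j // μ j = -c}) :
    ∃ σ : Equiv.Perm J, ∀ j, μ (σ j) = -μ j := by
  classical
  have e : ∀ c : ℂ, {j // μ j = c} ≃ {j // -μ j = c} := by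
    intro c
    have e0 : {j // -μ j = c} ≃ {j // μ j = -c} :=
      Equiv.subtypeEquivRight (fun j => neg_eq_iff_eq_neg)
    apply Fintype.equivOfCardEq
    rw [Fintype.card_congr e0, ← Nat.card_eq_fintype_card, ← Nat.card_eq_fintype_card]
    exact h c
  exact ⟨Equiv.ofFiberEquiv e,
    fun j => neg_eq_iff_eq_neg.mp (Equiv.ofFiberEquiv_map e j)⟩

lemma charpoly_eq {J : Type} [Fintype J] [DecidableEq J] (b : OrthonormalBasis J ℂ V)
    (μ : J → ℂ) (hμ : ∀ j, U (b j) = μ j • b j) :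
    U.charpoly = ∏ j, (X - C (μ j)) := by
  have hM : LinearMap.toMatrix b.toBasis b.toBasis U = Matrix.diagonal μ := by
    ext i j
    rw [LinearMap.toMatrix_apply, OrthonormalBasis.coe_toBasis, hμ]
    simp only [map_smul, Finsupp.smul_apply, smul_eq_mul]
    rw [show (b j) = b.toBasis j from (congrFun (OrthonormalBasis.coe_toBasis b) j).symm,
      Module.Basis.repr_self, Finsupp.single_apply]
    rcases eq_or_ne i j with rfl | hij
    · rw [if_pos rfl, mul_one, Matrix.diagonal_apply_eq]
    · rw [if_neg (Ne.symm hij), mul_zero, Matrix.diagonal_apply_ne _ hij]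
  have hcm : Matrix.charmatrix (Matrix.diagonal μ)
      = Matrix.diagonal (fun j => (X : ℂ[X]) - C (μ j)) := by
    ext i j
    rcases eq_or_ne i j with rfl | hij
    · rw [Matrix.charmatrix_apply_eq, Matrix.diagonal_apply_eq, Matrix.diagonal_apply_eq]
    · rw [Matrix.charmatrix_apply_ne _ _ _ hij, Matrix.diagonal_apply_ne _ hij,
        Matrix.diagonal_apply_ne _ hij, map_zero, neg_zero]
  rw [← LinearMap.charpoly_toMatrix U b.toBasis, hM, Matrix.charpoly, hcm,
    Matrix.det_diagonal]

lemma prod_comp_neg {J : Type} [Fintype J] (μ : J → ℂ) :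
    (∏ j, (X - C (μ j))).comp (-X) =
      (-1 : ℂ[X]) ^ Fintype.card J * ∏ j, (X - C (-μ j)) := by
  rw [Polynomial.prod_comp]
  have h : ∀ j : J, (X - C (μ j)).comp (-X) = (-1) * (X - C (-μ j)) := by
    intro j
    simp only [Polynomial.sub_comp, Polynomial.X_comp, Polynomial.C_comp, Polynomial.C_neg]
    ring
  rw [Finset.prod_congr rfl (fun j _ => h j), Finset.prod_mul_distrib,
    Finset.prod_const, Finset.card_univ]

lemma roots_prod {J : Type} [Fintype J] (μ : J → ℂ) :
    (∏ j, (X - C (μ j))).roots = Multiset.map μ Finset.univ.val := by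
  rw [Finset.prod_eq_multiset_prod]
  have h : Multiset.map (fun j => X - C (μ j)) Finset.univ.val
      = Multiset.map (fun a => X - C a) (Multiset.map μ Finset.univ.val) := by
    rw [Multiset.map_map]; rfl
  rw [h, Polynomial.roots_multiset_prod_X_sub_C]

lemma count_fiber {J : Type} [Fintype J] (μ : J → ℂ) (c : ℂ) :
    Multiset.count c (Multiset.map μ Finset.univ.val) = Nat.card {j // μ j = c} := by
  classical
  rw [Multiset.count_map, Nat.card_eq_fintype_card, Fintype.card_subtype, Finset.card,
    Finset.filter_val]
  congr 1
  exact Multiset.filter_congr (fun a _ => ⟨Eq.symm, Eq.symm⟩)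

lemma finrank_symm_of_partner (U₂ : V →ₗ[ℂ] V) (hA : adjoint U₂ * U₂ = 1)
    (hB : U₂ * adjoint U₂ = 1) (hC : U * U₂ + U₂ * U = 0) (c : ℂ) :
    Module.finrank ℂ (Module.End.eigenspace U c) =
      Module.finrank ℂ (Module.End.eigenspace U (-c)) := by
  have hanti : ∀ T : V →ₗ[ℂ] V, U * T = -(T * U) →
      ∀ (a : ℂ) (v : V), v ∈ Module.End.eigenspace U a →
        T v ∈ Module.End.eigenspace U (-a) := by
    intro T hT a v hv
    rw [Module.End.mem_eigenspace_iff] at hv ⊢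
    calc U (T v) = (U * T) v := rfl
    _ = -((T * U) v) := by rw [hT]; rfl
    _ = (-a) • T v := by rw [Module.End.mul_apply, hv, map_smul, neg_smul]
  set W := adjoint U₂ with hW
  have hUT : U * U₂ = -(U₂ * U) := eq_neg_of_add_eq_zero_left hC
  have hU₂U : U₂ * U = -(U * U₂) := eq_neg_of_add_eq_zero_right hC
  have hUW : U * W = -(W * U) := by
    calc U * W = (W * U₂) * U * W := by rw [hA, one_mul]
    _ = W * (U₂ * U) * W := by rw [mul_assoc W U₂ U]
    _ = W * -(U * U₂) * W := by rw [hU₂U]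
    _ = -(W * U * (U₂ * W)) := by noncomm_ring
    _ = -(W * U) := by rw [hB, mul_one]
  have h1 : ∀ v ∈ Module.End.eigenspace U c, U₂ v ∈ Module.End.eigenspace U (-c) :=
    fun v hv => hanti U₂ hUT c v hv
  have h2 : ∀ v ∈ Module.End.eigenspace U (-c), W v ∈ Module.End.eigenspace U c := by
    intro v hv
    have := hanti W hUW (-c) v hv
    rwa [neg_neg] at this
  have key1 : ∀ v : V, U₂ (W v) = v := by
    intro v; rw [← Module.End.mul_apply, hB, Module.End.one_apply]
  have key2 : ∀ v : V, W (U₂ v) = v := by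
    intro v; rw [← Module.End.mul_apply, hA, Module.End.one_apply]
  have e : (Module.End.eigenspace U c) ≃ₗ[ℂ] (Module.End.eigenspace U (-c)) := by
    refine LinearEquiv.ofLinear (U₂.restrict h1) (W.restrict h2) ?_ ?_
    · apply LinearMap.ext; intro v; apply Subtype.ext
      show U₂ (W (v : V)) = (v : V)
      exact key1 v
    · apply LinearMap.ext; intro v; apply Subtype.ext
      show W (U₂ (v : V)) = (v : V)
      exact key2 v
  exact LinearEquiv.finrank_eq e

lemma partner_of_perm {J : Type} [Fintype J] [DecidableEq J] (b : OrthonormalBasis J ℂ V)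
    (μ : J → ℂ) (hμ : ∀ j, U (b j) = μ j • b j) (σ : Equiv.Perm J)
    (hσ : ∀ j, μ (σ j) = -μ j) :
    ∃ U₂ : V →ₗ[ℂ] V, adjoint U₂ * U₂ = 1 ∧ U₂ * adjoint U₂ = 1 ∧
      U * U₂ + U₂ * U = 0 := by
  set e : V ≃ₗᵢ[ℂ] V := b.repr.trans (b.reindex σ⁻¹).repr.symm with he
  set T : V →ₗ[ℂ] V := e.toLinearIsometry.toLinearMap with hTdef
  have hbσ : ∀ j, T (b j) = b (σ j) := by
    intro j
    show e (b j) = b (σ j)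
    rw [he]
    simp only [LinearIsometryEquiv.trans_apply]
    rw [OrthonormalBasis.repr_self, OrthonormalBasis.repr_symm_single,
      OrthonormalBasis.reindex_apply]
    congr 1
  have hT1 : adjoint T * T = 1 := by
    apply LinearMap.ext; intro x
    apply ext_inner_right ℂ
    intro y
    rw [Module.End.mul_apply, adjoint_inner_left, Module.End.one_apply]
    exact e.inner_map_map x y
  have hT2 : T * adjoint T = 1 := mul_eq_one_comm.mp hT1
  refine ⟨T, hT1, hT2, ?_⟩
  apply b.toBasis.ext
  intro j
  rw [OrthonormalBasis.coe_toBasis]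
  rw [LinearMap.add_apply, Module.End.mul_apply, Module.End.mul_apply, LinearMap.zero_apply]
  rw [hbσ j, hμ (σ j), hμ j, map_smul, hbσ j, hσ j, neg_smul, neg_add_cancel]


end AnticommAux

theorem anticommuting_partner_iff_spectrum_symmetric
    {V : Type*} [NormedAddCommGroup V] [InnerProductSpace ℂ V]
    [FiniteDimensional ℂ V] (U₁ : V →ₗ[ℂ] V)
    (hU₁ : adjoint U₁ * U₁ = 1) (hU₁' : U₁ * adjoint U₁ = 1) :
    ((∃ U₂ : V →ₗ[ℂ] V, adjoint U₂ * U₂ = 1 ∧ U₂ * adjoint U₂ = 1 ∧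
        U₁ * U₂ + U₂ * U₁ = 0) ↔
      (U₁.charpoly.comp (-X) = U₁.charpoly ∨
        U₁.charpoly.comp (-X) = -U₁.charpoly)) ∧
    ((∃ U₂ : V →ₗ[ℂ] V, adjoint U₂ * U₂ = 1 ∧ U₂ * adjoint U₂ = 1 ∧
        U₁ * U₂ + U₂ * U₁ = 0) ↔
      (∀ lam : ℂ, Module.finrank ℂ (Module.End.eigenspace U₁ lam) =
        Module.finrank ℂ (Module.End.eigenspace U₁ (-lam)))) ∧
    ((∃ U₂ : V →ₗ[ℂ] V, adjoint U₂ * U₂ = 1 ∧ U₂ * adjoint U₂ = 1 ∧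
        U₁ * U₂ + U₂ * U₁ = 0) → Even (Module.finrank ℂ V)) := by
  classical
  obtain ⟨m, b, μ, hμ, hcard⟩ := AnticommAux.exists_eigenbasis U₁ hU₁ hU₁'
  have hchar : U₁.charpoly = ∏ j, (X - C (μ j)) := AnticommAux.charpoly_eq U₁ b μ hμ
  have hroots : U₁.charpoly.roots = Multiset.map μ Finset.univ.val := by
    rw [hchar]; exact AnticommAux.roots_prod μ
  have hcomp : U₁.charpoly.comp (-X)
      = (-1 : Polynomial ℂ) ^ m * ∏ j, (X - C (-μ j)) := by
    rw [hchar, AnticommAux.prod_comp_neg μ, Fintype.card_fin]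
  have hμ0 : ∀ j, μ j ≠ 0 := by
    intro j hj0
    have hb0 : U₁ (b j) = 0 := by rw [hμ j, hj0, zero_smul]
    have hbz : b j = 0 := by
      have h2 : (adjoint U₁ * U₁) (b j) = b j := by rw [hU₁, Module.End.one_apply]
      rw [Module.End.mul_apply, hb0, map_zero] at h2
      exact h2.symm
    exact b.orthonormal.ne_zero j hbz
  have hPtoS2 : (∃ U₂ : V →ₗ[ℂ] V, adjoint U₂ * U₂ = 1 ∧ U₂ * adjoint U₂ = 1 ∧
        U₁ * U₂ + U₂ * U₁ = 0) →
      (∀ lam : ℂ, Module.finrank ℂ (Module.End.eigenspace U₁ lam) =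
        Module.finrank ℂ (Module.End.eigenspace U₁ (-lam))) := by
    rintro ⟨U₂, h1, h2, h3⟩ lam
    exact AnticommAux.finrank_symm_of_partner U₁ U₂ h1 h2 h3 lam
  have hS2σ : (∀ lam : ℂ, Module.finrank ℂ (Module.End.eigenspace U₁ lam) =
        Module.finrank ℂ (Module.End.eigenspace U₁ (-lam))) →
      ∃ σ : Equiv.Perm (Fin m), ∀ j, μ (σ j) = -μ j := by
    intro hs2
    exact AnticommAux.exists_perm μ (fun c => by rw [← hcard c, ← hcard (-c)]; exact hs2 c)
  have hS2toP : (∀ lam : ℂ, Module.finrank ℂ (Module.End.eigenspace U₁ lam) =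
        Module.finrank ℂ (Module.End.eigenspace U₁ (-lam))) →
      (∃ U₂ : V →ₗ[ℂ] V, adjoint U₂ * U₂ = 1 ∧ U₂ * adjoint U₂ = 1 ∧
        U₁ * U₂ + U₂ * U₁ = 0) := by
    intro hs2
    obtain ⟨σ, hσ⟩ := hS2σ hs2
    exact AnticommAux.partner_of_perm U₁ b μ hμ σ hσ
  have hS2toS1 : (∀ lam : ℂ, Module.finrank ℂ (Module.End.eigenspace U₁ lam) =
        Module.finrank ℂ (Module.End.eigenspace U₁ (-lam))) →
      (U₁.charpoly.comp (-X) = U₁.charpoly ∨ U₁.charpoly.comp (-X) = -U₁.charpoly) := by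
    intro hs2
    obtain ⟨σ, hσ⟩ := hS2σ hs2
    have hprodneg : (∏ j, (X - C (-μ j))) = ∏ j, (X - C (μ j)) := by
      calc ∏ j, (X - C (-μ j)) = ∏ j, (X - C (μ (σ j))) :=
        Finset.prod_congr rfl (fun j _ => by rw [hσ j])
      _ = ∏ j, (X - C (μ j)) := Equiv.prod_comp σ (fun j => X - C (μ j))
    have hcomp' : U₁.charpoly.comp (-X)
        = (-1 : Polynomial ℂ) ^ m * U₁.charpoly := by
      rw [hcomp, hprodneg, ← hchar]
    rcases Nat.even_or_odd m with he | ho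
    · left; rw [hcomp', he.neg_one_pow, one_mul]
    · right; rw [hcomp', ho.neg_one_pow, neg_one_mul]
  have hrootsneg : (U₁.charpoly.comp (-X)).roots
      = Multiset.map (fun j => -μ j) Finset.univ.val := by
    rw [hcomp]
    have h1 : ((-1 : Polynomial ℂ) ^ m)
        = C ((-1 : ℂ) ^ m) := by
      rw [map_pow, map_neg, map_one]
    rw [h1, Polynomial.roots_C_mul _ (pow_ne_zero _ (by norm_num : (-1 : ℂ) ≠ 0))]
    exact AnticommAux.roots_prod (fun j => -μ j)
  have hS1toS2 : (U₁.charpoly.comp (-X) = U₁.charpoly ∨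
        U₁.charpoly.comp (-X) = -U₁.charpoly) →
      (∀ lam : ℂ, Module.finrank ℂ (Module.End.eigenspace U₁ lam) =
        Module.finrank ℂ (Module.End.eigenspace U₁ (-lam))) := by
    intro hs1 lam
    have hrr : Multiset.map (fun j => -μ j) Finset.univ.val
        = Multiset.map μ Finset.univ.val := by
      rcases hs1 with h | h
      · rw [← hrootsneg, h, hroots]
      · rw [← hrootsneg, h]
        have hnp : (-U₁.charpoly) = C (-1 : ℂ) * U₁.charpoly := by
          rw [map_neg, map_one, neg_one_mul]
        rw [hnp, Polynomial.roots_C_mul _ (by norm_num : (-1 : ℂ) ≠ 0), hroots]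
    have k1 : Multiset.count lam (Multiset.map (fun j => -μ j) Finset.univ.val)
        = Nat.card {j // μ j = -lam} := by
      have hm : Multiset.map (fun j => -μ j) Finset.univ.val
          = Multiset.map Neg.neg (Multiset.map μ Finset.univ.val) := by
        rw [Multiset.map_map]; rfl
      have hcnt := Multiset.count_map_eq_count' (Neg.neg : ℂ → ℂ)
        (Multiset.map μ Finset.univ.val) neg_injective (-lam)
      rw [neg_neg] at hcnt
      rw [hm, hcnt, AnticommAux.count_fiber]
    calc Module.finrank ℂ (Module.End.eigenspace U₁ lam)
        = Nat.card {j // μ j = lam} := hcard lam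
      _ = Multiset.count lam (Multiset.map μ Finset.univ.val) :=
          (AnticommAux.count_fiber μ lam).symm
      _ = Multiset.count lam (Multiset.map (fun j => -μ j) Finset.univ.val) := by rw [hrr]
      _ = Nat.card {j // μ j = -lam} := k1
      _ = Module.finrank ℂ (Module.End.eigenspace U₁ (-lam)) := (hcard (-lam)).symm
  have hS1toEven : (U₁.charpoly.comp (-X) = U₁.charpoly ∨
        U₁.charpoly.comp (-X) = -U₁.charpoly) → Even (Module.finrank ℂ V) := by
    intro hs1
    rcases hs1 with h | h
    · have hlc := Polynomial.leadingCoeff_comp (p := U₁.charpoly) (q := -X)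
        (by rw [natDegree_neg, natDegree_X]; norm_num)
      rw [h, U₁.charpoly_monic.leadingCoeff, leadingCoeff_neg, leadingCoeff_X,
        one_mul] at hlc
      have heven : Even U₁.charpoly.natDegree := by
        rw [← neg_one_pow_eq_one_iff_even (R := ℂ) (by norm_num : (-1 : ℂ) ≠ 1)]
        exact hlc.symm
      rwa [U₁.charpoly_natDegree] at heven
    · exfalso
      have he0 : U₁.charpoly.eval 0 = 0 := by
        have h1 : (U₁.charpoly.comp (-X)).eval 0 = U₁.charpoly.eval 0 := by
          rw [Polynomial.eval_comp, Polynomial.eval_neg, Polynomial.eval_X, neg_zero]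
        rw [h, Polynomial.eval_neg] at h1
        linear_combination (-1/2 : ℂ) * h1
      have hmem : (0 : ℂ) ∈ Multiset.map μ Finset.univ.val := by
        rw [← hroots]
        exact Polynomial.mem_roots'.mpr ⟨U₁.charpoly_monic.ne_zero, he0⟩
      obtain ⟨j, _, hj⟩ := Multiset.mem_map.mp hmem
      exact hμ0 j hj
  exact ⟨⟨fun hp => hS2toS1 (hPtoS2 hp), fun h1 => hS2toP (hS1toS2 h1)⟩,
    ⟨hPtoS2, hS2toP⟩, fun hp => hS1toEven (hS2toS1 (hPtoS2 hp))⟩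
end

section
/- If a unitary operator U₁ on a nonzero finite-dimensional complex inner product space admits a unitary anticommuting partner, then the dimension of the space is even. -/
open LinearMap

theorem anticommuting_partner_implies_even_dim
    {V : Type*} [NormedAddCommGroup V] [InnerProductSpace ℂ V]
    [FiniteDimensional ℂ V] (hdim : 0 < Module.finrank ℂ V)
    (U₁ U₂ : V →ₗ[ℂ] V)
    (hU₁ : adjoint U₁ * U₁ = 1) (hU₁' : U₁ * adjoint U₁ = 1)
    (hU₂ : adjoint U₂ * U₂ = 1) (hU₂' : U₂ * adjoint U₂ = 1)
    (hanti : U₁ * U₂ + U₂ * U₁ = 0) :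
    Even (Module.finrank ℂ V) := by
  have heq : U₁ * U₂ = -(U₂ * U₁) := by linear_combination (norm := module) hanti
  have hd1 : LinearMap.det U₁ ≠ 0 := by
    intro h
    have := congrArg LinearMap.det hU₁
    rw [Module.End.mul_eq_comp, LinearMap.det_comp, h, mul_zero, map_one] at this
    exact zero_ne_one this
  have hd2 : LinearMap.det U₂ ≠ 0 := by
    intro h
    have := congrArg LinearMap.det hU₂
    rw [Module.End.mul_eq_comp, LinearMap.det_comp, h, mul_zero, map_one] at this
    exact zero_ne_one this
  have hdet := congrArg LinearMap.det heq
  rw [show -(U₂ * U₁) = (-1 : ℂ) • (U₂ * U₁) by module, LinearMap.det_smul,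
    Module.End.mul_eq_comp, Module.End.mul_eq_comp, LinearMap.det_comp, LinearMap.det_comp] at hdet
  have hpow : ((-1 : ℂ)) ^ Module.finrank ℂ V = 1 := by
    have h2 : LinearMap.det U₂ * LinearMap.det U₁ ≠ 0 := mul_ne_zero hd2 hd1
    rw [mul_comm (LinearMap.det U₁)] at hdet
    exact (mul_left_cancel₀ h2 (by linear_combination hdet)).symm
  exact (neg_one_pow_eq_one_iff_even (by norm_num : (-1 : ℂ) ≠ 1)).mp hpow
end

section
/- For the Pauli Peres-Mermin square, for every density matrix ρ on ℂ⁴, the quantity Tr(ρ·A₁₁A₁₂A₁₃) + Tr(ρ·A₂₁A₂₂A₂₃) + Tr(ρ·A₃₁A₃₂A₃₃) + Tr(ρ·A₁₁A₂₁A₃₁) + Tr(ρ·A₁₂A₂₂A₃₂) - Tr(ρ·A₁₃A₂₃A₃₃) equals 6. -/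
open Matrix Kronecker Complex
open scoped ComplexOrder

noncomputable def pauliX : Matrix (Fin 2) (Fin 2) ℂ := !![0, 1; 1, 0]
noncomputable def pauliY : Matrix (Fin 2) (Fin 2) ℂ := !![0, -I; I, 0]
noncomputable def pauliZ : Matrix (Fin 2) (Fin 2) ℂ := !![1, 0; 0, -1]

lemma hXX : pauliX * pauliX = 1 := by
  simp [pauliX, Matrix.mul_fin_two, Matrix.one_fin_two]

lemma hZZ : pauliZ * pauliZ = 1 := by
  simp [pauliZ, Matrix.mul_fin_two, Matrix.one_fin_two]

lemma hXZY : pauliX * pauliZ * pauliY = (-I) • 1 := by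
  ext i j
  fin_cases i <;> fin_cases j <;>
    simp [pauliX, pauliY, pauliZ, Matrix.mul_fin_two, Matrix.one_fin_two]

lemma hZXY : pauliZ * pauliX * pauliY = I • 1 := by
  ext i j
  fin_cases i <;> fin_cases j <;>
    simp [pauliX, pauliY, pauliZ, Matrix.mul_fin_two, Matrix.one_fin_two]

theorem pauli_peres_mermin_quantum_value
    (ρ : Matrix (Fin 2 × Fin 2) (Fin 2 × Fin 2) ℂ)
    (hρ : ρ.PosSemidef) (htr : ρ.trace = 1) :
    let A : Fin 3 → Fin 3 → Matrix (Fin 2 × Fin 2) (Fin 2 × Fin 2) ℂ :=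
      ![![pauliX ⊗ₖ 1, 1 ⊗ₖ pauliX, pauliX ⊗ₖ pauliX],
        ![1 ⊗ₖ pauliZ, pauliZ ⊗ₖ 1, pauliZ ⊗ₖ pauliZ],
        ![pauliX ⊗ₖ pauliZ, pauliZ ⊗ₖ pauliX, pauliY ⊗ₖ pauliY]]
    (ρ * (A 0 0 * A 0 1 * A 0 2)).trace + (ρ * (A 1 0 * A 1 1 * A 1 2)).trace +
      (ρ * (A 2 0 * A 2 1 * A 2 2)).trace + (ρ * (A 0 0 * A 1 0 * A 2 0)).trace +
      (ρ * (A 0 1 * A 1 1 * A 2 1)).trace - (ρ * (A 0 2 * A 1 2 * A 2 2)).trace = 6 := by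
  intro A
  have h1 : A 0 0 * A 0 1 * A 0 2 = 1 := by
    show (pauliX ⊗ₖ 1) * (1 ⊗ₖ pauliX) * (pauliX ⊗ₖ pauliX) = 1
    rw [← Matrix.mul_kronecker_mul, ← Matrix.mul_kronecker_mul]
    simp [hXX]
  have h2 : A 1 0 * A 1 1 * A 1 2 = 1 := by
    show (1 ⊗ₖ pauliZ) * (pauliZ ⊗ₖ 1) * (pauliZ ⊗ₖ pauliZ) = 1
    rw [← Matrix.mul_kronecker_mul, ← Matrix.mul_kronecker_mul]
    simp [hZZ]
  have h3 : A 2 0 * A 2 1 * A 2 2 = 1 := by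
    show (pauliX ⊗ₖ pauliZ) * (pauliZ ⊗ₖ pauliX) * (pauliY ⊗ₖ pauliY) = 1
    rw [← Matrix.mul_kronecker_mul, ← Matrix.mul_kronecker_mul, hXZY, hZXY]
    rw [Matrix.smul_kronecker, Matrix.kronecker_smul, Matrix.one_kronecker_one,
      smul_smul]
    simp [Complex.I_mul_I]
  have h4 : A 0 0 * A 1 0 * A 2 0 = 1 := by
    show (pauliX ⊗ₖ 1) * (1 ⊗ₖ pauliZ) * (pauliX ⊗ₖ pauliZ) = 1
    rw [← Matrix.mul_kronecker_mul, ← Matrix.mul_kronecker_mul]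
    simp [hXX, hZZ]
  have h5 : A 0 1 * A 1 1 * A 2 1 = 1 := by
    show (1 ⊗ₖ pauliX) * (pauliZ ⊗ₖ 1) * (pauliZ ⊗ₖ pauliX) = 1
    rw [← Matrix.mul_kronecker_mul, ← Matrix.mul_kronecker_mul]
    simp [hXX, hZZ]
  have h6 : A 0 2 * A 1 2 * A 2 2 = (-1 : ℂ) • 1 := by
    show (pauliX ⊗ₖ pauliX) * (pauliZ ⊗ₖ pauliZ) * (pauliY ⊗ₖ pauliY) = _
    rw [← Matrix.mul_kronecker_mul, ← Matrix.mul_kronecker_mul, hXZY,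
      Matrix.smul_kronecker, Matrix.kronecker_smul, Matrix.one_kronecker_one,
      smul_smul]
    norm_num [neg_mul_neg, Complex.I_mul_I]
  rw [h1, h2, h3, h4, h5, h6]
  simp [htr]
  ring
end

section
/- Suppose U₁, U₂, U₃ are unitary operators on a 2n-dimensional complex Hilbert space that pairwise anticommute and satisfy U₁U₂U₃ = i·id. Then there exists an orthonormal basis in which U₁ is block diagonal with 2×2 blocks λᵢσz, U₂ is block diagonal with blocks λᵢ'σx, and U₃ is block diagonal with blocks (λᵢλᵢ')*σy, for some unit-modulus complex numbers λᵢ, λᵢ'. -/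
set_option maxHeartbeats 2000000

open Matrix Complex Module

local notation "⟪" x ", " y "⟫" => @inner ℂ _ _ x y

lemma norm_pres {V : Type} [NormedAddCommGroup V] [InnerProductSpace ℂ V]
    (T : V →ₗ[ℂ] V) (hT : ∀ x y : V, ⟪T x, T y⟫ = ⟪x, y⟫) (x : V) : ‖T x‖ = ‖x‖ := by
  have h := hT x x
  rw [inner_self_eq_norm_sq_to_K, inner_self_eq_norm_sq_to_K] at h
  have : (‖T x‖ : ℝ) ^ 2 = ‖x‖ ^ 2 := by exact_mod_cast h
  nlinarith [norm_nonneg (T x), norm_nonneg x]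

lemma core (n : ℕ) : ∀ (V : Type) [NormedAddCommGroup V] [InnerProductSpace ℂ V]
    [FiniteDimensional ℂ V], finrank ℂ V = 2 * n →
    ∀ (T S : V →ₗ[ℂ] V),
    (∀ x y : V, ⟪T x, T y⟫ = ⟪x, y⟫) →
    (∀ x y : V, ⟪S x, S y⟫ = ⟪x, y⟫) →
    (∀ x, T (S x) = - S (T x)) →
    ∃ (v w : Fin n → V) (lam lam' : Fin n → ℂ),
      Orthonormal ℂ (fun p : Fin 2 × Fin n => if p.1 = 0 then v p.2 else w p.2) ∧
      ∀ i, ‖lam i‖ = 1 ∧ ‖lam' i‖ = 1 ∧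
        T (v i) = lam i • v i ∧ T (w i) = -lam i • w i ∧
        S (v i) = lam' i • w i ∧ S (w i) = lam' i • v i := by
  induction n with
  | zero =>
    intro V _ _ _ _ T S _ _ _
    refine ⟨Fin.elim0, Fin.elim0, Fin.elim0, Fin.elim0, ?_, fun i => i.elim0⟩
    rw [orthonormal_iff_ite]
    intro i
    exact i.2.elim0
  | succ n IH =>
    intro V _ _ _ hdim T S hT hS hTS
    have : Nontrivial V := Module.nontrivial_of_finrank_pos (R := ℂ)
      (by rw [hdim]; omega)
    -- eigenvalue of T
    obtain ⟨lam0, hlam0⟩ := Module.End.exists_eigenvalue (T : Module.End ℂ V)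
    set E := Module.End.eigenspace (T : Module.End ℂ V) lam0 with hE
    have hEne : Nontrivial E := Submodule.nontrivial_iff_ne_bot.mpr hlam0
    -- S² preserves E
    have hSSE : ∀ x ∈ E, (S ∘ₗ S) x ∈ E := by
      intro x hx
      rw [Module.End.mem_eigenspace_iff] at hx ⊢
      show T (S (S x)) = lam0 • S (S x)
      rw [hTS, hTS, LinearMap.map_neg, neg_neg, hx, LinearMap.map_smul, LinearMap.map_smul]
    set S2 : E →ₗ[ℂ] E := (S ∘ₗ S).restrict hSSE with hS2
    obtain ⟨μ, hμev⟩ := Module.End.exists_eigenvalue (S2 : Module.End ℂ E)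
    obtain ⟨ve, hve⟩ := hμev.exists_hasEigenvector
    have hvene : (ve : V) ≠ 0 := fun h => hve.2 (Subtype.ext h)
    set v0 : V := (‖(ve : V)‖ : ℂ)⁻¹ • (ve : V) with hv0def
    have hnv0 : ‖v0‖ = 1 := by
      rw [hv0def, norm_smul, norm_inv, Complex.norm_real, norm_norm,
        inv_mul_cancel₀ (norm_ne_zero_iff.mpr hvene)]
    have hv0ne : v0 ≠ 0 := fun h => by rw [h, norm_zero] at hnv0; norm_num at hnv0
    have hTv0 : T v0 = lam0 • v0 := by
      have h1 : T (ve : V) = lam0 • (ve : V) := Module.End.mem_eigenspace_iff.mp ve.2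
      rw [hv0def, LinearMap.map_smul, h1, smul_comm]
    have hSSv0 : S (S v0) = μ • v0 := by
      have h1 : S (S (ve : V)) = μ • (ve : V) := by
        have := congrArg (Subtype.val) (Module.End.mem_eigenspace_iff.mp hve.1)
        rwa [LinearMap.restrict_coe_apply] at this
      rw [hv0def, LinearMap.map_smul, LinearMap.map_smul, h1, smul_comm]
    have hlam0n : ‖lam0‖ = 1 := by
      have h := norm_pres T hT v0
      rw [hTv0, norm_smul, hnv0] at h
      simpa using h
    have hlam0ne : lam0 ≠ 0 := by
      intro h; rw [h, norm_zero] at hlam0n; norm_num at hlam0n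
    have hμn : ‖μ‖ = 1 := by
      have h := norm_pres S hS (S v0)
      rw [hSSv0, norm_pres S hS v0, norm_smul, hnv0] at h
      simpa using h
    have hμ0 : μ ≠ 0 := by
      intro h; rw [h, norm_zero] at hμn; norm_num at hμn
    set lam'0 : ℂ := Complex.exp (Complex.log μ / 2) with hlam'def
    have hsq : lam'0 * lam'0 = μ := by
      rw [hlam'def, ← Complex.exp_add]
      have : Complex.log μ / 2 + Complex.log μ / 2 = Complex.log μ := by ring
      rw [this, Complex.exp_log hμ0]
    have hlam'ne : lam'0 ≠ 0 := Complex.exp_ne_zero _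
    have hlam'n : ‖lam'0‖ = 1 := by
      have h : ‖lam'0‖ * ‖lam'0‖ = 1 := by rw [← norm_mul, hsq, hμn]
      nlinarith [norm_nonneg lam'0]
    set w0 : V := lam'0⁻¹ • S v0 with hw0def
    have hSv0 : S v0 = lam'0 • w0 := by
      rw [hw0def, smul_smul, mul_inv_cancel₀ hlam'ne, one_smul]
    have hSw0 : S w0 = lam'0 • v0 := by
      rw [hw0def, LinearMap.map_smul, hSSv0, smul_smul, ← hsq,
        inv_mul_cancel_left₀ hlam'ne]
    have hTw0 : T w0 = -lam0 • w0 := by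
      have hh : T (S v0) = -(lam0 • S v0) := by
        rw [hTS, hTv0, LinearMap.map_smul]
      rw [hw0def, LinearMap.map_smul, hh, smul_neg, smul_smul, smul_smul, ← neg_smul]
      congr 1
      ring
    have hnw0 : ‖w0‖ = 1 := by
      rw [hw0def, norm_smul, norm_pres S hS v0, hnv0, norm_inv, hlam'n]
      norm_num
    have hconj : (starRingEnd ℂ) lam0 * lam0 = 1 := by
      have hn : Complex.normSq lam0 = 1 := by
        rw [Complex.normSq_eq_norm_sq, hlam0n]; norm_num
      rw [mul_comm, Complex.mul_conj, hn]
      norm_num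
    have hvw : ⟪v0, w0⟫ = 0 := by
      have h := hT v0 w0
      rw [hTv0, hTw0, inner_smul_left, inner_smul_right] at h
      have h3 : (2:ℂ) * ⟪v0, w0⟫ = 0 := by
        linear_combination -h - ⟪v0, w0⟫ * hconj
      simpa using h3
    -- the invariant 2-dimensional subspace
    have hwv : ⟪w0, v0⟫ = 0 := by
      rw [← inner_conj_symm, hvw, map_zero]
    have hon2 : Orthonormal ℂ ![v0, w0] := by
      rw [orthonormal_iff_ite]
      intro i j
      fin_cases i <;> fin_cases j <;>
        simp [hvw, hwv, inner_self_eq_norm_sq_to_K, hnv0, hnw0]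
    set K : Submodule ℂ V := Submodule.span ℂ (Set.range ![v0, w0]) with hK
    have hv0K : v0 ∈ K := Submodule.subset_span ⟨0, rfl⟩
    have hw0K : w0 ∈ K := Submodule.subset_span ⟨1, rfl⟩
    have hTmap : K ≤ Submodule.map T K := by
      rw [hK, Submodule.span_le]
      rintro x ⟨i, rfl⟩
      fin_cases i
      · refine ⟨lam0⁻¹ • v0, K.smul_mem _ hv0K, ?_⟩
        show T (lam0⁻¹ • v0) = ![v0, w0] 0
        rw [LinearMap.map_smul, hTv0, smul_smul, inv_mul_cancel₀ hlam0ne, one_smul]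
        rfl
      · refine ⟨(-lam0⁻¹) • w0, K.smul_mem _ hw0K, ?_⟩
        show T ((-lam0⁻¹) • w0) = ![v0, w0] 1
        rw [LinearMap.map_smul, hTw0, smul_smul,
          show (-lam0⁻¹) * -lam0 = 1 by field_simp, one_smul]
        rfl
    have hSmap : K ≤ Submodule.map S K := by
      rw [hK, Submodule.span_le]
      rintro x ⟨i, rfl⟩
      fin_cases i
      · refine ⟨lam'0⁻¹ • w0, K.smul_mem _ hw0K, ?_⟩
        show S (lam'0⁻¹ • w0) = ![v0, w0] 0
        rw [LinearMap.map_smul, hSw0, smul_smul, inv_mul_cancel₀ hlam'ne, one_smul]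
        rfl
      · refine ⟨lam'0⁻¹ • v0, K.smul_mem _ hv0K, ?_⟩
        show S (lam'0⁻¹ • v0) = ![v0, w0] 1
        rw [LinearMap.map_smul, ← hw0def]
        rfl
    have hTperp : ∀ x ∈ Kᗮ, T x ∈ Kᗮ := by
      intro x hx
      rw [Submodule.mem_orthogonal]
      intro u hu
      obtain ⟨u', hu'K, hu'⟩ := hTmap hu
      rw [← hu', hT]
      exact (Submodule.mem_orthogonal K x).mp hx u' hu'K
    have hSperp : ∀ x ∈ Kᗮ, S x ∈ Kᗮ := by
      intro x hx
      rw [Submodule.mem_orthogonal]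
      intro u hu
      obtain ⟨u', hu'K, hu'⟩ := hSmap hu
      rw [← hu', hS]
      exact (Submodule.mem_orthogonal K x).mp hx u' hu'K
    have hKrank : finrank ℂ K = 2 := by
      simpa using finrank_span_eq_card hon2.linearIndependent
    have hKperp : finrank ℂ ↥Kᗮ = 2 * n := by
      have h := Submodule.finrank_add_finrank_orthogonal K
      rw [hdim, hKrank] at h
      omega
    have hT'in : ∀ x y : ↥Kᗮ,
        ⟪(T.restrict hTperp) x, (T.restrict hTperp) y⟫ = ⟪x, y⟫ := by
      intro x y
      rw [Submodule.coe_inner, Submodule.coe_inner, LinearMap.restrict_coe_apply,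
        LinearMap.restrict_coe_apply, hT]
    have hS'in : ∀ x y : ↥Kᗮ,
        ⟪(S.restrict hSperp) x, (S.restrict hSperp) y⟫ = ⟪x, y⟫ := by
      intro x y
      rw [Submodule.coe_inner, Submodule.coe_inner, LinearMap.restrict_coe_apply,
        LinearMap.restrict_coe_apply, hS]
    have hTS' : ∀ x, (T.restrict hTperp) ((S.restrict hSperp) x)
        = - (S.restrict hSperp) ((T.restrict hTperp) x) := by
      intro x
      apply Subtype.ext
      rw [LinearMap.restrict_coe_apply, LinearMap.restrict_coe_apply,
        NegMemClass.coe_neg, LinearMap.restrict_coe_apply,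
        LinearMap.restrict_coe_apply]
      exact hTS ↑x
    obtain ⟨v', w', lam, lam', hON, hrel⟩ :=
      IH ↥Kᗮ hKperp (T.restrict hTperp) (S.restrict hSperp) hT'in hS'in hTS'
    refine ⟨Fin.cons v0 (fun i => (v' i : V)), Fin.cons w0 (fun i => (w' i : V)),
      Fin.cons lam0 lam, Fin.cons lam'0 lam', ?_, ?_⟩
    · rw [orthonormal_iff_ite]
      rintro ⟨k, i⟩ ⟨l, j⟩
      rcases Fin.eq_zero_or_eq_succ i with rfl | ⟨i', rfl⟩ <;>
        rcases Fin.eq_zero_or_eq_succ j with rfl | ⟨j', rfl⟩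
      · simp only [Fin.cons_zero]
        fin_cases k <;> fin_cases l <;>
          simp [hvw, hwv, inner_self_eq_norm_sq_to_K, hnv0, hnw0, Prod.ext_iff]
      · simp only [Fin.cons_zero, Fin.cons_succ]
        have hmem : (if l = 0 then ((v' j' : V)) else ((w' j' : V))) ∈ Kᗮ := by
          split <;> exact SetLike.coe_mem _
        have hKm : (if k = 0 then v0 else w0) ∈ K := by
          split
          · exact hv0K
          · exact hw0K
        rw [if_neg (show ¬((k, (0 : Fin (n+1))) = (l, Fin.succ j')) from
          fun h => Fin.succ_ne_zero j' (congrArg Prod.snd h).symm)]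
        exact (Submodule.mem_orthogonal K _).mp hmem _ hKm
      · simp only [Fin.cons_zero, Fin.cons_succ]
        have hmem : (if k = 0 then ((v' i' : V)) else ((w' i' : V))) ∈ Kᗮ := by
          split <;> exact SetLike.coe_mem _
        have hKm : (if l = 0 then v0 else w0) ∈ K := by
          split
          · exact hv0K
          · exact hw0K
        rw [if_neg (show ¬((k, Fin.succ i') = (l, (0 : Fin (n+1)))) from
          fun h => Fin.succ_ne_zero i' (congrArg Prod.snd h)), ← inner_conj_symm,
          (Submodule.mem_orthogonal K _).mp hmem _ hKm, map_zero]
      · simp only [Fin.cons_succ]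
        have h := orthonormal_iff_ite.mp hON (k, i') (l, j')
        rw [Submodule.coe_inner] at h
        simpa [apply_ite (Subtype.val : ↥Kᗮ → V), Prod.ext_iff, Fin.succ_inj] using h
    · intro i
      refine Fin.cases ?_ ?_ i
      · simp only [Fin.cons_zero]
        exact ⟨hlam0n, hlam'n, hTv0, hTw0, hSv0, hSw0⟩
      · intro j
        simp only [Fin.cons_succ]
        obtain ⟨h1, h2, h3, h4, h5, h6⟩ := hrel j
        refine ⟨h1, h2, ?_, ?_, ?_, ?_⟩
        · have := congrArg Subtype.val h3
          rwa [LinearMap.restrict_coe_apply, Submodule.coe_smul] at this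
        · have := congrArg Subtype.val h4
          rwa [LinearMap.restrict_coe_apply, Submodule.coe_smul] at this
        · have := congrArg Subtype.val h5
          rwa [LinearMap.restrict_coe_apply, Submodule.coe_smul] at this
        · have := congrArg Subtype.val h6
          rwa [LinearMap.restrict_coe_apply, Submodule.coe_smul] at this


-- inner product preservation for unitary matrices acting on EuclideanSpace
lemma unitary_inner_pres {ι : Type} [Fintype ι] [DecidableEq ι]
    (U : Matrix ι ι ℂ) (hU : U ∈ Matrix.unitaryGroup ι ℂ)
    (x y : EuclideanSpace ℂ ι) :
    ⟪Matrix.toEuclideanLin U x, Matrix.toEuclideanLin U y⟫ = ⟪x, y⟫ := by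
  have hs : star U * U = 1 := (Unitary.mem_iff.mp hU).1
  have key : star (U *ᵥ (x : ι → ℂ)) ⬝ᵥ (U *ᵥ (y : ι → ℂ))
      = star (x : ι → ℂ) ⬝ᵥ (y : ι → ℂ) := by
    rw [Matrix.star_mulVec, Matrix.dotProduct_mulVec, Matrix.vecMul_vecMul,
      ← Matrix.star_eq_conjTranspose, hs, Matrix.vecMul_one]
  simp only [PiLp.inner_apply, RCLike.inner_apply]
  calc _ = star (U *ᵥ (x : ι → ℂ)) ⬝ᵥ (U *ᵥ (y : ι → ℂ)) := by
          simp only [dotProduct]; exact Finset.sum_congr rfl fun _ _ => mul_comm _ _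
    _ = star (x : ι → ℂ) ⬝ᵥ (y : ι → ℂ) := key
    _ = _ := by
          simp only [dotProduct]; exact Finset.sum_congr rfl fun _ _ => mul_comm _ _

theorem anticommuting_triple_block_diagonal_form (n : ℕ)
    (U₁ U₂ U₃ : Matrix (Fin 2 × Fin n) (Fin 2 × Fin n) ℂ)
    (hU₁ : U₁ ∈ Matrix.unitaryGroup (Fin 2 × Fin n) ℂ)
    (hU₂ : U₂ ∈ Matrix.unitaryGroup (Fin 2 × Fin n) ℂ)
    (hU₃ : U₃ ∈ Matrix.unitaryGroup (Fin 2 × Fin n) ℂ)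
    (h12 : U₁ * U₂ = -(U₂ * U₁)) (h13 : U₁ * U₃ = -(U₃ * U₁))
    (h23 : U₂ * U₃ = -(U₃ * U₂))
    (hprod : U₁ * U₂ * U₃ = Complex.I • 1) :
    ∃ B ∈ Matrix.unitaryGroup (Fin 2 × Fin n) ℂ, ∃ lam lam' : Fin n → ℂ,
      (∀ i, ‖lam i‖ = 1 ∧ ‖lam' i‖ = 1) ∧
      star B * U₁ * B = Matrix.blockDiagonal (fun i => lam i • pauliZ) ∧
      star B * U₂ * B = Matrix.blockDiagonal (fun i => lam' i • pauliX) ∧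
      star B * U₃ * B =
        Matrix.blockDiagonal (fun i => (starRingEnd ℂ (lam i * lam' i)) • pauliY) := by
  have hdim : Module.finrank ℂ (EuclideanSpace ℂ (Fin 2 × Fin n)) = 2 * n := by
    simp [finrank_euclideanSpace]
  have hanti : ∀ x, Matrix.toEuclideanLin U₁ (Matrix.toEuclideanLin U₂ x)
      = - Matrix.toEuclideanLin U₂ (Matrix.toEuclideanLin U₁ x) := by
    intro x
    ext i
    show (U₁ *ᵥ (U₂ *ᵥ (x : _ → ℂ))) i = (-(U₂ *ᵥ (U₁ *ᵥ (x : _ → ℂ)))) i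
    rw [Matrix.mulVec_mulVec, Matrix.mulVec_mulVec, ← Matrix.neg_mulVec, ← h12]
  obtain ⟨v, w, lam, lam', hON, hrel⟩ := core n (EuclideanSpace ℂ (Fin 2 × Fin n)) hdim
    (Matrix.toEuclideanLin U₁) (Matrix.toEuclideanLin U₂)
    (unitary_inner_pres U₁ hU₁) (unitary_inner_pres U₂ hU₂) hanti
  set B : Matrix (Fin 2 × Fin n) (Fin 2 × Fin n) ℂ :=
    Matrix.of (fun x p => (if p.1 = 0 then v p.2 else w p.2 : EuclideanSpace ℂ (Fin 2 × Fin n)) x) with hBdef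
  have hB1 : star B * B = 1 := by
    ext p q
    have h := orthonormal_iff_ite.mp hON p q
    simp only [PiLp.inner_apply, RCLike.inner_apply] at h
    show ∑ x, (starRingEnd ℂ) (B x p) * B x q = (1 : Matrix _ _ ℂ) p q
    rw [Matrix.one_apply, ← h]
    exact Finset.sum_congr rfl fun _ _ => mul_comm _ _
  have hB2 : B * star B = 1 := mul_eq_one_comm.mp hB1
  have hBmem : B ∈ Matrix.unitaryGroup (Fin 2 × Fin n) ℂ :=
    Matrix.mem_unitaryGroup_iff.mpr hB2
  -- the two key intertwining identities
  have hint : ∀ (U : Matrix (Fin 2 × Fin n) (Fin 2 × Fin n) ℂ)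
      (f : Fin n → Matrix (Fin 2) (Fin 2) ℂ),
      (∀ i, Matrix.toEuclideanLin U (v i) = f i 0 0 • v i + f i 1 0 • w i) →
      (∀ i, Matrix.toEuclideanLin U (w i) = f i 0 1 • v i + f i 1 1 • w i) →
      U * B = B * Matrix.blockDiagonal f := by
    intro U f hv hw
    ext x q
    rcases q with ⟨k, i⟩
    have lhs : (U * B) x (k, i) = (U *ᵥ (fun y => B y (k, i))) x := by
      simp [Matrix.mul_apply, Matrix.mulVec, dotProduct]
    have rhs : (B * Matrix.blockDiagonal f) x (k, i)
        = B x (0, i) * f i 0 k + B x (1, i) * f i 1 k := by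
      simp only [Matrix.mul_apply, Matrix.blockDiagonal_apply, Fintype.sum_prod_type_right,
        Fin.sum_univ_two, mul_ite, mul_zero]
      rw [Finset.sum_add_distrib]
      simp
    rw [lhs, rhs]
    by_cases hk : k = 0
    · subst hk
      have h := congrFun (congrArg (fun (z : EuclideanSpace ℂ (Fin 2 × Fin n)) => (z : (Fin 2 × Fin n) → ℂ)) (hv i)) x
      have hcol : (fun y => B y (0, i)) = (v i : (Fin 2 × Fin n) → ℂ) := by
        funext y; simp [hBdef]
      rw [hcol]
      show (U *ᵥ (v i : (Fin 2 × Fin n) → ℂ)) x = B x (0, i) * f i 0 0 + B x (1, i) * f i 1 0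
      rw [show (U *ᵥ (v i : (Fin 2 × Fin n) → ℂ)) x = f i 0 0 * v i x + f i 1 0 * w i x from h]
      simp [hBdef]
      ring
    · have hk1 : k = 1 := by omega
      subst hk1
      have h := congrFun (congrArg (fun (z : EuclideanSpace ℂ (Fin 2 × Fin n)) => (z : (Fin 2 × Fin n) → ℂ)) (hw i)) x
      have hcol : (fun y => B y (1, i)) = (w i : (Fin 2 × Fin n) → ℂ) := by
        funext y; simp [hBdef]
      rw [hcol]
      show (U *ᵥ (w i : (Fin 2 × Fin n) → ℂ)) x = B x (0, i) * f i 0 1 + B x (1, i) * f i 1 1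
      rw [show (U *ᵥ (w i : (Fin 2 × Fin n) → ℂ)) x = f i 0 1 * v i x + f i 1 1 * w i x from h]
      simp [hBdef]
      ring
  have hUB1 : U₁ * B = B * Matrix.blockDiagonal (fun i => lam i • pauliZ) := by
    apply hint
    · intro i
      have := (hrel i).2.2.1
      rw [this]
      simp [pauliZ]
    · intro i
      have := (hrel i).2.2.2.1
      rw [this]
      simp [pauliZ]
  have hUB2 : U₂ * B = B * Matrix.blockDiagonal (fun i => lam' i • pauliX) := by
    apply hint
    · intro i
      have := (hrel i).2.2.2.2.1
      rw [this]
      simp [pauliX]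
    · intro i
      have := (hrel i).2.2.2.2.2
      rw [this]
      simp [pauliX]
  have hD1 : star B * U₁ * B = Matrix.blockDiagonal (fun i => lam i • pauliZ) := by
    rw [mul_assoc, hUB1, ← mul_assoc, hB1, one_mul]
  have hD2 : star B * U₂ * B = Matrix.blockDiagonal (fun i => lam' i • pauliX) := by
    rw [mul_assoc, hUB2, ← mul_assoc, hB1, one_mul]
  refine ⟨B, hBmem, lam, lam', fun i => ⟨(hrel i).1, (hrel i).2.1⟩, hD1, hD2, ?_⟩
  -- the third block identity
  have hs1 : star U₁ * U₁ = 1 := (Unitary.mem_iff.mp hU₁).1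
  have hs2 : star U₂ * U₂ = 1 := (Unitary.mem_iff.mp hU₂).1
  have hU3eq : U₃ = Complex.I • (star U₂ * star U₁) := by
    have e1 : star U₂ * star U₁ * (U₁ * U₂ * U₃) = U₃ := by
      simp only [mul_assoc]
      rw [← mul_assoc (star U₁) U₁ (U₂ * U₃), hs1, one_mul,
        ← mul_assoc (star U₂) U₂ U₃, hs2, one_mul]
    rw [← e1, hprod, Matrix.mul_smul, mul_one]
  have hmid : star B * (star U₂ * star U₁) * B
      = star (star B * U₂ * B) * star (star B * U₁ * B) := by
    rw [StarMul.star_mul, StarMul.star_mul, StarMul.star_mul, StarMul.star_mul, star_star]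
    simp only [mul_assoc]
    rw [← mul_assoc B (star B) (star U₁ * B), hB2, one_mul]
  have hfactor : star B * U₃ * B
      = Complex.I • star (Matrix.blockDiagonal (fun i => lam i • pauliZ)
          * Matrix.blockDiagonal (fun i => lam' i • pauliX)) := by
    rw [hU3eq, Matrix.mul_smul, Matrix.smul_mul]
    congr 1
    rw [StarMul.star_mul, ← hD1, ← hD2]
    exact hmid
  rw [hfactor, ← Matrix.blockDiagonal_mul, Matrix.star_eq_conjTranspose,
    Matrix.blockDiagonal_conjTranspose]
  rw [show (Complex.I • Matrix.blockDiagonal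
      (fun k => ((lam k • pauliZ) * (lam' k • pauliX))ᴴ) : Matrix _ _ ℂ)
    = Matrix.blockDiagonal (Complex.I • fun k => ((lam k • pauliZ) * (lam' k • pauliX))ᴴ)
    from (Matrix.blockDiagonal_smul _ _).symm]
  refine congrArg Matrix.blockDiagonal (funext fun k => ?_)
  show Complex.I • ((lam k • pauliZ) * (lam' k • pauliX))ᴴ
      = (starRingEnd ℂ) (lam k * lam' k) • pauliY
  have hZX : pauliZ * pauliX = !![0, 1; -1, 0] := by
    ext a b
    fin_cases a <;> fin_cases b <;>
      simp [pauliZ, pauliX, Matrix.mul_apply, Fin.sum_univ_two]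
  have hTrans : (!![0, 1; -1, 0] : Matrix (Fin 2) (Fin 2) ℂ)ᴴ = !![0, -1; 1, 0] := by
    ext a b
    fin_cases a <;> fin_cases b <;> simp [Matrix.conjTranspose_apply]
  have hIY : Complex.I • (!![0, -1; 1, 0] : Matrix (Fin 2) (Fin 2) ℂ) = pauliY := by
    ext a b
    fin_cases a <;> fin_cases b <;> simp [pauliY]
  calc Complex.I • ((lam k • pauliZ) * (lam' k • pauliX))ᴴ
      = Complex.I • (((lam k * lam' k) • (pauliZ * pauliX))ᴴ) := by
        rw [smul_mul_assoc, mul_smul_comm, smul_smul]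
    _ = Complex.I • (star (lam k * lam' k) • !![0, -1; 1, 0]) := by
        rw [hZX, Matrix.conjTranspose_smul, hTrans]
    _ = star (lam k * lam' k) • (Complex.I • !![0, -1; 1, 0]) := smul_comm _ _ _
    _ = (starRingEnd ℂ) (lam k * lam' k) • pauliY := by rw [hIY, starRingEnd_apply]
end

section
/- Let U₁, U₂, U₃ be unitary operators on a finite-dimensional complex Hilbert space satisfying U₁U₂U₃ = i·id and pairwise anticommuting. Consider the nine operators of the generalized Peres-Mermin square: row 1 = (U₁*⊗I, I⊗U₁*, U₁⊗U₁), row 2 = (I⊗U₂*, U₂*⊗I, U₂⊗U₂), row 3 = (U₁⊗U₂, U₂⊗U₁, U₃⊗U₃). Then the product of the three operators in each row and in each of the first two columns equals the identity on the tensor product space, and the product in the third column equals minus the identity. -/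
open Matrix Kronecker

theorem generalized_peres_mermin_square_products (n : ℕ)
    (U₁ U₂ U₃ : Matrix (Fin n) (Fin n) ℂ)
    (hU₁ : U₁ ∈ Matrix.unitaryGroup (Fin n) ℂ)
    (hU₂ : U₂ ∈ Matrix.unitaryGroup (Fin n) ℂ)
    (hU₃ : U₃ ∈ Matrix.unitaryGroup (Fin n) ℂ)
    (h12 : U₁ * U₂ = -(U₂ * U₁)) (h13 : U₁ * U₃ = -(U₃ * U₁))
    (h23 : U₂ * U₃ = -(U₃ * U₂))
    (hprod : U₁ * U₂ * U₃ = Complex.I • 1) :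
    let A : Fin 3 → Fin 3 → Matrix (Fin n × Fin n) (Fin n × Fin n) ℂ :=
      ![![(star U₁) ⊗ₖ 1, 1 ⊗ₖ (star U₁), U₁ ⊗ₖ U₁],
        ![1 ⊗ₖ (star U₂), (star U₂) ⊗ₖ 1, U₂ ⊗ₖ U₂],
        ![U₁ ⊗ₖ U₂, U₂ ⊗ₖ U₁, U₃ ⊗ₖ U₃]]
    (∀ j : Fin 3, A j 0 * A j 1 * A j 2 = 1) ∧
    A 0 0 * A 1 0 * A 2 0 = 1 ∧ A 0 1 * A 1 1 * A 2 1 = 1 ∧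
    A 0 2 * A 1 2 * A 2 2 = -1 := by
  intro A
  have s1 : star U₁ * U₁ = 1 := hU₁.1
  have s2 : star U₂ * U₂ = 1 := hU₂.1
  have hprod' : U₂ * U₁ * U₃ = (-Complex.I) • 1 := by
    have : U₂ * U₁ = -(U₁ * U₂) := by rw [h12, neg_neg]
    rw [this]
    rw [neg_mul, hprod, neg_smul]
  refine ⟨?_, ?_, ?_, ?_⟩
  · intro j
    fin_cases j
    · show (star U₁) ⊗ₖ 1 * 1 ⊗ₖ (star U₁) * (U₁ ⊗ₖ U₁) = 1
      rw [← Matrix.mul_kronecker_mul, ← Matrix.mul_kronecker_mul]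
      rw [mul_one, one_mul, s1, Matrix.one_kronecker_one]
    · show 1 ⊗ₖ (star U₂) * (star U₂) ⊗ₖ 1 * (U₂ ⊗ₖ U₂) = 1
      rw [← Matrix.mul_kronecker_mul, ← Matrix.mul_kronecker_mul]
      rw [mul_one, one_mul, s2, Matrix.one_kronecker_one]
    · show U₁ ⊗ₖ U₂ * (U₂ ⊗ₖ U₁) * (U₃ ⊗ₖ U₃) = 1
      rw [← Matrix.mul_kronecker_mul, ← Matrix.mul_kronecker_mul]
      rw [hprod, hprod', Matrix.smul_kronecker, Matrix.kronecker_smul,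
        Matrix.one_kronecker_one, smul_smul]
      simp [Complex.I_mul_I]
  · show (star U₁) ⊗ₖ 1 * (1 ⊗ₖ (star U₂)) * (U₁ ⊗ₖ U₂) = 1
    rw [← Matrix.mul_kronecker_mul, ← Matrix.mul_kronecker_mul]
    rw [mul_one, one_mul, s1, s2, Matrix.one_kronecker_one]
  · show 1 ⊗ₖ (star U₁) * ((star U₂) ⊗ₖ 1) * (U₂ ⊗ₖ U₁) = 1
    rw [← Matrix.mul_kronecker_mul, ← Matrix.mul_kronecker_mul]
    rw [mul_one, one_mul, s1, s2, Matrix.one_kronecker_one]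
  · show U₁ ⊗ₖ U₁ * (U₂ ⊗ₖ U₂) * (U₃ ⊗ₖ U₃) = -1
    rw [← Matrix.mul_kronecker_mul, ← Matrix.mul_kronecker_mul]
    rw [hprod, Matrix.smul_kronecker, Matrix.kronecker_smul,
      Matrix.one_kronecker_one, smul_smul]
    simp [Complex.I_mul_I]
end
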